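/- Let α : A → B, β : A → C, f : B → D, g : C → D be ring homomorphisms between commutative rings forming a Cartesian square, and assume g : C → D is surjective. Let I ⊆ A be an ideal such that the induced ring homomorphism A/I → C/(Ideal.map β I) is injective. Then the induced square of quotient rings, with corners A/I, B/(Ideal.map α I), C/(Ideal.map β I), D/(Ideal.map (f ∘ α) I) and the induced homomorphisms, is again Cartesian; in particular the canonical map A/I → {(b̄, c̄) ∈ B/(Ideal.map α I) × C/(Ideal.map β I) | the two images in D/(Ideal.map (f ∘ α) I) agree} is bijective. -/
import Mathlib


/-- A Cartesian square of commutative rings with `g : C → D` surjective stays Cartesian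
after quotienting by an ideal `I ⊆ A` (and its pushforwards along the maps of the square),
provided `A/I → C/(I·C)` is injective. Cartesianness is expressed by: for every compatible
pair of elements of the two quotients there is a unique element of `A/I` mapping to them. -/
theorem cartesian_square_of_quotients
    {A B C D : Type*} [CommRing A] [CommRing B] [CommRing C] [CommRing D]
    (α : A →+* B) (β : A →+* C) (f : B →+* D) (g : C →+* D)
    (hcomm : f.comp α = g.comp β)
    (hcart : ∀ (b : B) (c : C), f b = g c → ∃! a : A, α a = b ∧ β a = c)
    (hg : Function.Surjective g)
    (I : Ideal A)
    (hinj : Function.Injective (Ideal.quotientMap (I.map β) β Ideal.le_comap_map)) :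
    ∀ (b : B ⧸ I.map α) (c : C ⧸ I.map β),
      Ideal.quotientMap (I.map (f.comp α)) f
          (by rw [← Ideal.map_map]; exact Ideal.le_comap_map) b =
        Ideal.quotientMap (I.map (f.comp α)) g
          (by rw [hcomm, ← Ideal.map_map]; exact Ideal.le_comap_map) c →
      ∃! a : A ⧸ I,
        Ideal.quotientMap (I.map α) α Ideal.le_comap_map a = b ∧
          Ideal.quotientMap (I.map β) β Ideal.le_comap_map a = c := by
  intro b c hfg
  obtain ⟨b0, rfl⟩ := Ideal.Quotient.mk_surjective b
  obtain ⟨c0, rfl⟩ := Ideal.Quotient.mk_surjective c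
  rw [Ideal.quotientMap_mk, Ideal.quotientMap_mk, Ideal.Quotient.eq] at hfg
  have hmem : f b0 - g c0 ∈ Ideal.map g (I.map β) := by
    rwa [Ideal.map_map, ← hcomm]
  obtain ⟨j, hj, hgj⟩ := (Ideal.mem_map_iff_of_surjective g hg).mp hmem
  obtain ⟨a, ⟨ha1, ha2⟩, -⟩ := hcart b0 (c0 + j) (by rw [map_add, hgj]; ring)
  refine ⟨Ideal.Quotient.mk I a, ⟨?_, ?_⟩, ?_⟩
  · rw [Ideal.quotientMap_mk, ha1]
  · rw [Ideal.quotientMap_mk, ha2, Ideal.Quotient.eq]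
    simpa using hj
  · intro y hy
    apply hinj
    rw [hy.2, Ideal.quotientMap_mk, ha2, Ideal.Quotient.eq]
    simpa using hj
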